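/- In the real hyperbolic plane ℍ² (or ℍⁿ), for the spheres S_r(x) equipped with the natural rotation-invariant probability measures ν_r, the statistical hyperbolicity index E(ℍⁿ) = lim_{r→∞} (1/r) ∫∫_{S_r(x)×S_r(x)} d(x',x'') dν_r dν_r equals 2. -/

import Mathlib

open MeasureTheory Filter UpperHalfPlane

namespace Stmt13Aux

noncomputable section

open Real Matrix
open scoped ENNReal

/-- Rotation matrices in SL(2,ℝ). -/
def K (θ : ℝ) : Matrix.SpecialLinearGroup (Fin 2) ℝ :=
  ⟨!![Real.cos θ, Real.sin θ; -Real.sin θ, Real.cos θ], by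
    simp [Matrix.det_fin_two_of]
    linear_combination Real.sin_sq_add_cos_sq θ⟩

lemma K_mul (a b : ℝ) : K a * K b = K (a + b) := by
  ext i j
  rw [Matrix.SpecialLinearGroup.coe_mul]
  simp only [K, Matrix.SpecialLinearGroup.coe_mul, Matrix.mul_fin_two]
  fin_cases i <;> fin_cases j <;>
    simp [Real.cos_add, Real.sin_add] <;> ring

lemma denomK_ne_zero (θ : ℝ) (z : ℍ) : (-Real.sin θ : ℂ) * z + Real.cos θ ≠ 0 := by
  have h : ![-Real.sin θ, Real.cos θ] ≠ 0 := by
    intro h0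
    have h1 : -Real.sin θ = 0 := congrFun h0 0
    have h2 : Real.cos θ = 0 := congrFun h0 1
    nlinarith [Real.sin_sq_add_cos_sq θ]
  simpa using UpperHalfPlane.linear_ne_zero (cd := ![-Real.sin θ, Real.cos θ]) z h

lemma coe_K_smul (θ : ℝ) (z : ℍ) :
    ((K θ • z : ℍ) : ℂ) = (Real.cos θ * z + Real.sin θ) / (-Real.sin θ * z + Real.cos θ) := by
  rw [UpperHalfPlane.specialLinearGroup_apply]
  simp [K]

lemma K_smul_I (θ : ℝ) : K θ • UpperHalfPlane.I = UpperHalfPlane.I := by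
  ext
  rw [coe_K_smul, UpperHalfPlane.coe_I, div_eq_iff (by simpa using denomK_ne_zero θ UpperHalfPlane.I)]
  simp [Complex.ext_iff]


variable (r : ℝ)

/-- Base point at distance `r` above `i`. -/
def z0 : ℍ := UpperHalfPlane.mk (Real.exp r * Complex.I) (by
  simp only [Complex.mul_im, Complex.ofReal_re, Complex.I_im, Complex.ofReal_im, Complex.I_re,
    mul_one, mul_zero, add_zero]
  exact Real.exp_pos r)

def P (θ : ℝ) : ℍ := K θ • z0 r

def Q (θ : ℝ) : ℝ := Real.exp (2*r) * Real.sin θ ^ 2 + Real.cos θ ^ 2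

lemma Q_pos (θ : ℝ) : 0 < Q r θ := by
  unfold Q
  rcases eq_or_ne (Real.sin θ) 0 with h | h
  · have h2 : Real.cos θ ^ 2 = 1 := by nlinarith [Real.sin_sq_add_cos_sq θ]
    simp [h, h2]
  · have h1 : 0 < Real.exp (2*r) * Real.sin θ ^ 2 := by positivity
    nlinarith [sq_nonneg (Real.cos θ)]

lemma coe_P (θ : ℝ) :
    ((P r θ : ℍ) : ℂ) = ((1 - Real.exp (2*r)) * Real.sin θ * Real.cos θ + Real.exp r * Complex.I)
      / (Q r θ : ℝ) := by
  rw [P, coe_K_smul]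
  rw [div_eq_div_iff (denomK_ne_zero θ (z0 r)) (by exact_mod_cast (Q_pos r θ).ne')]
  have hz : ((z0 r : ℍ) : ℂ) = Real.exp r * Complex.I := rfl
  have he : Real.exp (2*r) = (Real.exp r)^2 := by
    rw [two_mul, Real.exp_add]; ring
  rw [hz, Q, he]
  have hsc : ((Real.sin θ : ℂ))^2 + ((Real.cos θ : ℂ))^2 = 1 := by
    exact_mod_cast Real.sin_sq_add_cos_sq θ
  push_cast [-Complex.ofReal_sin, -Complex.ofReal_cos, -Complex.ofReal_exp]
  linear_combination ((Real.sin θ : ℂ) * (Real.exp r : ℂ)^2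
      + Complex.I * (Real.cos θ : ℂ) * (Real.exp r : ℂ)) * hsc
    + (Real.sin θ : ℂ) * (Real.exp r : ℂ)^2 * Complex.I_sq

lemma P_re (θ : ℝ) : (P r θ).re = (1 - Real.exp (2*r)) * Real.sin θ * Real.cos θ / Q r θ := by
  rw [← UpperHalfPlane.coe_re, coe_P]
  simp [-Complex.ofReal_sin, -Complex.ofReal_cos, -Complex.ofReal_exp]

lemma P_im (θ : ℝ) : (P r θ).im = Real.exp r / Q r θ := by
  rw [← UpperHalfPlane.coe_im, coe_P]
  simp [-Complex.ofReal_sin, -Complex.ofReal_cos, -Complex.ofReal_exp]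

lemma z0_im : (z0 r).im = Real.exp r := by
  simp only [z0, UpperHalfPlane.mk_im, Complex.mul_im, Complex.ofReal_re, Complex.I_im,
    Complex.ofReal_im, Complex.I_re, mul_one, mul_zero, add_zero]

lemma z0_re : (z0 r).re = 0 := by
  simp only [z0, UpperHalfPlane.mk_re, Complex.mul_re, Complex.ofReal_re, Complex.I_re,
    Complex.ofReal_im, Complex.I_im, mul_one, mul_zero, zero_sub, zero_mul, sub_zero, neg_zero,
    mul_zero]

lemma dist_I_z0 (hr : 0 ≤ r) : dist UpperHalfPlane.I (z0 r) = r := by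
  rw [UpperHalfPlane.dist_of_re_eq (by rw [z0_re]; rfl)]
  rw [z0_im, UpperHalfPlane.I_im, Real.log_one, Real.log_exp, Real.dist_eq]
  rw [abs_sub_comm, sub_zero, abs_of_nonneg hr]

lemma normSq_P_sub (a b : ℝ) : Complex.normSq ((P r a : ℂ) - (P r b : ℂ))
    = (Real.exp (2*r) - 1)^2 * Real.sin (a-b)^2 / (Q r a * Q r b) := by
  have hQa := (Q_pos r a).ne'
  have hQb := (Q_pos r b).ne'
  set E := Real.exp r with hE
  set E2 := Real.exp (2*r) with hE2
  set sa := Real.sin a; set ca := Real.cos a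
  set sb := Real.sin b; set cb := Real.cos b
  have ha : sa^2 + ca^2 = 1 := Real.sin_sq_add_cos_sq a
  have hb : sb^2 + cb^2 = 1 := Real.sin_sq_add_cos_sq b
  rw [coe_P, coe_P, div_sub_div _ _ (by exact_mod_cast hQa) (by exact_mod_cast hQb),
    Complex.normSq_div]
  have hnum : ((1 - E2) * sa * ca + E * Complex.I) * (Q r b : ℝ)
      - ((Q r a : ℝ) : ℂ) * ((1 - E2) * sb * cb + E * Complex.I)
      = (((1 - E2) * sa * ca * Q r b - (1 - E2) * sb * cb * Q r a : ℝ) : ℂ)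
        + ((E * (Q r b - Q r a) : ℝ) : ℂ) * Complex.I := by
    push_cast
    ring
  rw [hnum, Complex.normSq_add_mul_I, ← Complex.ofReal_mul, Complex.normSq_ofReal]
  rw [div_eq_div_iff (by positivity) (by positivity)]
  -- now a real polynomial identity modulo sin/cos relations
  have h2 : Q r b - Q r a = (E2 - 1) * (sb^2 - sa^2) := by
    simp only [Q]
    linear_combination hb - ha
  have h3 : sb^2 - sa^2 = -(Real.sin (a-b) * Real.sin (a+b)) := by
    rw [Real.sin_sub, Real.sin_add]
    linear_combination sa^2 * hb - sb^2 * ha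
  have h1 : (1 - E2) * sa * ca * Q r b - (1 - E2) * sb * cb * Q r a
      = (1 - E2) * Real.sin (a-b) * (ca * cb - E2 * sa * sb) := by
    simp only [Q, Real.sin_sub]
    ring
  have hEE : E2 = E^2 := by
    rw [hE, hE2, two_mul, Real.exp_add]; ring
  rw [h1, h2, h3, Real.sin_sub, Real.sin_add]
  simp only [Q, hEE, hE, hE2]
  have hEE' : Real.exp (2*r) = Real.exp r ^ 2 := by
    rw [two_mul, Real.exp_add]; ring
  rw [hEE']
  ring

lemma cosh_dist_P (a b : ℝ) :
    Real.cosh (dist (P r a) (P r b)) = 1 + 2 * Real.sinh r ^ 2 * Real.sin (a-b)^2 := by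
  rw [UpperHalfPlane.cosh_dist]
  have hd : dist ((P r a : ℍ) : ℂ) ((P r b : ℍ) : ℂ) ^ 2
      = Complex.normSq ((P r a : ℂ) - (P r b : ℂ)) := by
    rw [Complex.dist_eq, Complex.sq_norm]
  rw [hd, normSq_P_sub, P_im, P_im, Real.sinh_eq, Real.exp_neg]
  have hEE : Real.exp (2*r) = Real.exp r ^ 2 := by rw [two_mul, Real.exp_add]; ring
  rw [hEE]
  have hQa := (Q_pos r a).ne'
  have hQb := (Q_pos r b).ne'
  have hE := (Real.exp_pos r).ne'
  field_simp

lemma dist_I_P (hr : 0 ≤ r) (θ : ℝ) : dist UpperHalfPlane.I (P r θ) = r := by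
  have h : dist (K θ • UpperHalfPlane.I) (K θ • z0 r) = dist UpperHalfPlane.I (z0 r) :=
    dist_smul _ _ _
  rw [K_smul_I] at h
  rw [P, h, dist_I_z0 r hr]

lemma P_periodic : Function.Periodic (P r) π := by
  intro θ
  ext
  rw [coe_P, coe_P]
  simp only [Q, Real.sin_add_pi, Real.cos_add_pi]
  push_cast [-Complex.ofReal_sin, -Complex.ofReal_cos, -Complex.ofReal_exp]
  ring_nf

lemma P_neg_re (θ : ℝ) : (P r (-θ)).re = -(P r θ).re := by
  rw [P_re, P_re]
  simp only [Q, Real.sin_neg, Real.cos_neg]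
  ring_nf

lemma P_neg_im (θ : ℝ) : (P r (-θ)).im = (P r θ).im := by
  rw [P_im, P_im]
  simp only [Q, Real.sin_neg, Real.cos_neg]
  ring_nf

/-- circle equation for points at distance r from I -/
lemma circle_eq {w : ℍ} (hw : dist UpperHalfPlane.I w = r) :
    w.re ^ 2 + (w.im - Real.cosh r) ^ 2 = Real.sinh r ^ 2 := by
  have hc : dist (w : ℂ) ((UpperHalfPlane.I).center r) = UpperHalfPlane.I.im * Real.sinh r := by
    rw [← UpperHalfPlane.dist_eq_iff_dist_coe_center_eq, dist_comm]
    exact hw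
  rw [UpperHalfPlane.I_im, one_mul] at hc
  have h2 := congrArg (· ^ 2) hc
  rw [Complex.dist_eq_re_im] at h2
  rw [Real.sq_sqrt (by positivity)] at h2
  have hcre : ((UpperHalfPlane.I.center r : ℍ) : ℂ).re = 0 := by
    rw [UpperHalfPlane.coe_re, UpperHalfPlane.center_re, UpperHalfPlane.I_re]
  have hcim : ((UpperHalfPlane.I.center r : ℍ) : ℂ).im = Real.cosh r := by
    rw [UpperHalfPlane.coe_im, UpperHalfPlane.center_im, UpperHalfPlane.I_im, one_mul]
  rw [hcre, hcim] at h2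
  simpa using h2

lemma exists_P_eq (hr : 0 < r) (w : ℍ) (hw : dist UpperHalfPlane.I w = r) :
    ∃ θ : ℝ, P r θ = w := by
  have hcirc := circle_eq r hw
  have hsinh : 0 < Real.sinh r := Real.sinh_pos_iff.2 hr
  have him_pos : 0 < w.im := w.im_pos
  have hup : w.im ≤ Real.exp r := by
    rw [← Real.cosh_add_sinh]
    nlinarith [sq_nonneg w.re]
  have hlow : Real.exp (-r) ≤ w.im := by
    rw [← Real.cosh_sub_sinh]
    nlinarith [sq_nonneg w.re]
  have hE1 : 1 < Real.exp (2*r) := by { rw [Real.one_lt_exp_iff]; linarith }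
  set t : ℝ := (Real.exp r / w.im - 1) / (Real.exp (2*r) - 1) with ht
  have h0t : 0 ≤ t := by
    apply div_nonneg _ (by linarith)
    have : 1 ≤ Real.exp r / w.im := (one_le_div him_pos).2 hup
    linarith
  have ht1 : t ≤ 1 := by
    rw [ht, div_le_one (by linarith)]
    have h1 : Real.exp r / w.im ≤ Real.exp r / Real.exp (-r) :=
      div_le_div_of_nonneg_left (Real.exp_pos r).le (Real.exp_pos _) hlow
    have h2 : Real.exp r / Real.exp (-r) = Real.exp (2*r) := by
      rw [← Real.exp_sub]; ring_nf
    linarith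
  set θ0 := Real.arcsin (Real.sqrt t) with hθ0
  have hsq : Real.sqrt t ≤ 1 := Real.sqrt_le_one.mpr ht1
  have hsin : Real.sin θ0 = Real.sqrt t :=
    Real.sin_arcsin (by linarith [Real.sqrt_nonneg t]) hsq
  have hcos : Real.cos θ0 = Real.sqrt (1 - t) := by
    rw [hθ0, Real.cos_arcsin, Real.sq_sqrt h0t]
  have hQ : Q r θ0 = Real.exp r / w.im := by
    simp only [Q, hsin, hcos]
    rw [Real.sq_sqrt h0t, Real.sq_sqrt (by linarith : (0:ℝ) ≤ 1 - t)]
    have : t * (Real.exp (2*r) - 1) = Real.exp r / w.im - 1 :=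
      div_mul_cancel₀ _ (by linarith)
    linarith [this]
  have him : (P r θ0).im = w.im := by
    rw [P_im, hQ]
    field_simp
  have hre2 : (P r θ0).re ^ 2 = w.re ^ 2 := by
    have hP := circle_eq r (dist_I_P r hr.le θ0)
    rw [him] at hP
    linarith [hP, hcirc]
  rcases sq_eq_sq_iff_eq_or_eq_neg.1 hre2 with h | h
  · exact ⟨θ0, UpperHalfPlane.ext' h him⟩
  · refine ⟨-θ0, UpperHalfPlane.ext' ?_ ?_⟩
    · rw [P_neg_re, h]; ring
    · rw [P_neg_im, him]

lemma P_inj (hr : 0 < r) {c θ1 θ2 : ℝ} (h1 : θ1 ∈ Set.Ico c (c+π)) (h2 : θ2 ∈ Set.Ico c (c+π))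
    (heq : P r θ1 = P r θ2) : θ1 = θ2 := by
  have hE1 : 1 < Real.exp (2*r) := by { rw [Real.one_lt_exp_iff]; linarith }
  have hQ1 := Q_pos r θ1
  have hQ2 := Q_pos r θ2
  have him : (P r θ1).im = (P r θ2).im := by rw [heq]
  have hre : (P r θ1).re = (P r θ2).re := by rw [heq]
  rw [P_im, P_im] at him
  rw [P_re, P_re] at hre
  have hQeq : Q r θ1 = Q r θ2 := by
    have hE := (Real.exp_pos r).ne'
    field_simp at him
    exact him.symm
  have hs2 : Real.sin θ1 ^ 2 = Real.sin θ2 ^ 2 := by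
    have : Q r θ1 = Q r θ2 := hQeq
    simp only [Q] at this
    nlinarith [Real.sin_sq_add_cos_sq θ1, Real.sin_sq_add_cos_sq θ2]
  have hsc : Real.sin θ1 * Real.cos θ1 = Real.sin θ2 * Real.cos θ2 := by
    rw [hQeq] at hre
    have h1E : (1 : ℝ) - Real.exp (2*r) ≠ 0 := by linarith
    have h' : (1 - Real.exp (2*r)) * (Real.sin θ1 * Real.cos θ1)
        = (1 - Real.exp (2*r)) * (Real.sin θ2 * Real.cos θ2) := by
      field_simp at hre
      linear_combination (1 - Real.exp (2*r)) * hre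
    exact mul_left_cancel₀ h1E h'
  -- conclude 2θ1 ≡ 2θ2 mod 2π
  have hcos2 : Real.cos (2*θ1) = Real.cos (2*θ2) := by
    rw [Real.cos_two_mul', Real.cos_two_mul']
    nlinarith [Real.sin_sq_add_cos_sq θ1, Real.sin_sq_add_cos_sq θ2]
  have hsin2 : Real.sin (2*θ1) = Real.sin (2*θ2) := by
    rw [Real.sin_two_mul, Real.sin_two_mul]
    linear_combination 2 * hsc
  have hexp : Complex.exp ((2*θ1 : ℝ) * Complex.I) = Complex.exp ((2*θ2 : ℝ) * Complex.I) := by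
    rw [Complex.exp_mul_I, Complex.exp_mul_I]
    rw [← Complex.ofReal_cos, ← Complex.ofReal_cos, ← Complex.ofReal_sin, ← Complex.ofReal_sin]
    rw [hcos2, hsin2]
  obtain ⟨n, hn⟩ := Complex.exp_eq_exp_iff_exists_int.1 hexp
  have hn' : (2*θ1 : ℝ) = 2*θ2 + n * (2*Real.pi) := by
    have h' := congrArg Complex.im hn
    push_cast at h'
    simpa using h'
  have hb1 : -Real.pi < θ1 - θ2 := by
    have := h1.1; have := h2.2; linarith
  have hb2 : θ1 - θ2 < Real.pi := by
    have := h1.2; have := h2.1; linarith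
  have hpi := Real.pi_pos
  have hn0 : n = 0 := by
    have hlt : (n : ℝ) < 1 := by nlinarith
    have hgt : (-1 : ℝ) < (n : ℝ) := by nlinarith
    have h1 : n < 1 := by exact_mod_cast hlt
    have h2 : -1 < n := by exact_mod_cast hgt
    omega
  rw [hn0] at hn'
  push_cast at hn'
  linarith


variable (x : ℍ)

def gmat : Matrix.SpecialLinearGroup (Fin 2) ℝ :=
  ⟨!![Real.sqrt x.im, x.re / Real.sqrt x.im; 0, 1 / Real.sqrt x.im], by
    have h : Real.sqrt x.im ≠ 0 := by positivity
    simp [Matrix.det_fin_two_of]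
    field_simp⟩

lemma coe_gmat_smul (z : ℍ) : ((gmat x • z : ℍ) : ℂ) = (x.im : ℂ) * z + x.re := by
  rw [UpperHalfPlane.specialLinearGroup_apply]
  have h : Real.sqrt x.im ≠ 0 := by positivity
  have h2 : (Real.sqrt x.im : ℂ) ≠ 0 := by exact_mod_cast h
  have hsq : (Real.sqrt x.im : ℂ) * (Real.sqrt x.im : ℂ) = (x.im : ℂ) := by
    rw [← Complex.ofReal_mul, Real.mul_self_sqrt x.im_pos.le]
  simp only [gmat, UpperHalfPlane.coe_mk, Matrix.cons_val', Matrix.cons_val_zero,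
    Matrix.cons_val_one, Matrix.head_cons, Matrix.head_fin_const, Matrix.empty_val',
    Matrix.cons_val_fin_one, Algebra.algebraMap_self, RingHom.id_apply]
  norm_num
  field_simp
  linear_combination (↑z : ℂ) * hsq

lemma gmat_smul_I : gmat x • UpperHalfPlane.I = x := by
  ext
  rw [coe_gmat_smul, UpperHalfPlane.coe_I]
  rw [← UpperHalfPlane.re_add_im x]
  push_cast
  ring

/-- parametrization of the sphere of radius `r` about `x` -/
def Px (θ : ℝ) : ℍ := gmat x • P r θ

lemma dist_x_Px (hr : 0 ≤ r) (θ : ℝ) : dist x (Px r x θ) = r := by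
  have h : dist (gmat x • UpperHalfPlane.I) (gmat x • P r θ) = dist UpperHalfPlane.I (P r θ) :=
    dist_smul _ _ _
  rw [gmat_smul_I] at h
  rw [Px, h, dist_I_P r hr θ]

lemma Px_periodic : Function.Periodic (Px r x) π := fun θ => by
  unfold Px; rw [P_periodic]

lemma Px_inj (hr : 0 < r) {c θ1 θ2 : ℝ} (h1 : θ1 ∈ Set.Ico c (c+π)) (h2 : θ2 ∈ Set.Ico c (c+π))
    (heq : Px r x θ1 = Px r x θ2) : θ1 = θ2 :=
  P_inj r hr h1 h2 (MulAction.injective (gmat x) heq)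

lemma dist_Px_Px (a b : ℝ) : dist (Px r x a) (Px r x b) = dist (P r a) (P r b) :=
  dist_smul _ _ _

set_option maxHeartbeats 1000000 in
lemma Px_surj_window (hr : 0 < r) (w : ℍ) (hw : dist x w = r) (c : ℝ) :
    ∃ θ ∈ Set.Ico c (c+π), Px r x θ = w := by
  have hw' : dist UpperHalfPlane.I ((gmat x)⁻¹ • w) = r := by
    have h : dist (gmat x • UpperHalfPlane.I) (gmat x • ((gmat x)⁻¹ • w))
        = dist UpperHalfPlane.I ((gmat x)⁻¹ • w) := dist_smul _ _ _
    rw [gmat_smul_I, smul_inv_smul] at h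
    rw [← h, hw]
  obtain ⟨θ0, hθ0⟩ := exists_P_eq r hr _ hw'
  have hpi := Real.pi_pos
  set n : ℤ := ⌈(c - θ0)/π⌉ with hn
  refine ⟨θ0 + n * π, ⟨?_, ?_⟩, ?_⟩
  · have h1 : (c - θ0)/π ≤ n := Int.le_ceil _
    have := (div_le_iff₀ hpi).1 h1
    linarith
  · have h2 : (n : ℝ) < (c - θ0)/π + 1 := Int.ceil_lt_add_one _
    have h3 := mul_lt_mul_of_pos_right h2 hpi
    rw [add_mul, div_mul_cancel₀ _ hpi.ne', one_mul] at h3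
    linarith
  · have hper : Px r x (θ0 + n * π) = Px r x θ0 := by
      have h5 := (Px_periodic r x).sub_int_mul_eq (x := θ0 + n * π) n
      simpa using h5.symm
    rw [hper, Px, hθ0, smul_inv_smul]

/-- the rotation by `θ` about `x`, as an isometry equivalence -/
def rot (θ : ℝ) : ℍ ≃ᵢ ℍ := IsometryEquiv.constSMul (gmat x * K θ * (gmat x)⁻¹)

lemma rot_fixes (θ : ℝ) : rot x θ x = x := by
  show (gmat x * K θ * (gmat x)⁻¹) • x = x
  rw [mul_smul, mul_smul]
  have h1 : (gmat x)⁻¹ • x = UpperHalfPlane.I := by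
    rw [inv_smul_eq_iff, gmat_smul_I]
  rw [h1, K_smul_I, gmat_smul_I]

lemma rot_Px (θ s : ℝ) : rot x θ (Px r x s) = Px r x (θ + s) := by
  show (gmat x * K θ * (gmat x)⁻¹) • (gmat x • P r s) = gmat x • P r (θ + s)
  rw [P, P, smul_smul, smul_smul, smul_smul]
  congr 1
  rw [← K_mul θ s]
  group

section Meas

variable [MeasurableSpace UpperHalfPlane] [BorelSpace UpperHalfPlane]

lemma continuous_Px : Continuous (Px r x) := by
  rw [UpperHalfPlane.isEmbedding_coe.continuous_iff]
  have hcoe : ∀ θ, (((↑) : ℍ → ℂ) ∘ Px r x) θ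
      = (x.im : ℂ) * (((1 - Real.exp (2*r)) * Real.sin θ * Real.cos θ
          + Real.exp r * Complex.I) / (Q r θ : ℝ)) + x.re := by
    intro θ
    show ((Px r x θ : ℍ) : ℂ) = _
    rw [Px, coe_gmat_smul, coe_P]
  rw [show (((↑) : ℍ → ℂ) ∘ Px r x) = _ from funext hcoe]
  apply Continuous.add _ continuous_const
  apply Continuous.mul continuous_const
  apply Continuous.div
  · apply Continuous.add _ continuous_const
    fun_prop
  · apply Complex.continuous_ofReal.comp
    have : Continuous (Q r) := by unfold Q; fun_prop
    exact this
  · intro θ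
    exact_mod_cast (Q_pos r θ).ne'

lemma measurable_arc (hr : 0 < r) {a b : ℝ} (hab : a ≤ b) (hb : b < a + π) :
    MeasurableSet (Px r x '' Set.Ico a b) := by
  have heq : Px r x '' Set.Ico a b = (Px r x '' Set.Icc a b) \ {Px r x b} := by
    ext w
    constructor
    · rintro ⟨θ, hθ, rfl⟩
      refine ⟨⟨θ, ⟨hθ.1, hθ.2.le⟩, rfl⟩, ?_⟩
      intro hmem
      have : θ = b := Px_inj r x hr (c := a) ⟨hθ.1, hθ.2.trans hb⟩ ⟨hab, hb⟩
        (by simpa using hmem)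
      exact absurd this hθ.2.ne
    · rintro ⟨⟨θ, hθ, rfl⟩, hne⟩
      refine ⟨θ, ⟨hθ.1, lt_of_le_of_ne hθ.2 ?_⟩, rfl⟩
      intro h
      exact hne (by rw [h]; rfl)
  rw [heq]
  exact (((isCompact_Icc.image (continuous_Px r x)).isClosed).measurableSet).diff
    (measurableSet_singleton _)


/-- key bound: on the sphere, the proportion of points at distance `< (2-ε)r` from a given
point of the sphere is at most `2/N`. -/
lemma slice_bound (ν : Measure ℍ) [IsProbabilityMeasure ν]
    (hrot : ∀ f : ℍ ≃ᵢ ℍ, f x = x → Measure.map f ν = ν)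
    (hsupp : ν {y | dist x y = r}ᶜ = 0)
    (hr : 0 < r) (N : ℕ) (hN : 2 ≤ N) (ε : ℝ)
    (hcosh : Real.cosh ((2-ε)*r) ≤ 1 + 2*Real.sinh r^2 * Real.sin (π/N)^2)
    (z1 : ℍ) (hz1 : dist x z1 = r) :
    ν {z2 | dist z1 z2 < (2-ε)*r} ≤ 2/N := by
  have hpi := Real.pi_pos
  have hN0 : (0:ℝ) < N := by positivity
  set h : ℝ := π/N with hh
  have hh0 : 0 < h := by positivity
  have hhπ : h ≤ π/2 := by
    rw [hh, div_le_div_iff₀ hN0 two_pos]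
    nlinarith [hpi, (show (2:ℝ) ≤ N by exact_mod_cast hN)]
  have hNh : (N : ℝ) * h = π := by
    rw [hh]; field_simp
  obtain ⟨φ1, hφ1w, hφ1⟩ := Px_surj_window r x hr z1 hz1 0
  set c : ℝ := φ1 - h with hc
  set B : ℕ → Set ℍ := fun j => Px r x '' Set.Ico (c + j*h) (c + (j+1)*h) with hB
  have hmeas : ∀ j : ℕ, MeasurableSet (B j) := by
    intro j
    apply measurable_arc r x hr
    · nlinarith
    · push_cast; nlinarith
  -- each arc is inside the fundamental window when j < N
  have hwin : ∀ j : ℕ, j < N → ∀ θ ∈ Set.Ico (c + j*h) (c + (j+1)*h), θ ∈ Set.Ico c (c+π) := by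
    intro j hj θ hθ
    have hj1 : (j:ℝ) + 1 ≤ N := by exact_mod_cast hj
    constructor
    · have : (0:ℝ) ≤ j*h := by positivity
      linarith [hθ.1]
    · have : c + ((j:ℝ)+1)*h ≤ c + π := by
        rw [← hNh]
        have := mul_le_mul_of_nonneg_right hj1 hh0.le
        linarith
      linarith [hθ.2]
  -- the arcs are pairwise disjoint
  have hdisj : ∀ i < N, ∀ j < N, i ≠ j → Disjoint (B i) (B j) := by
    intro i hi j hj hij
    rw [Set.disjoint_left]
    rintro w ⟨θ1, hθ1, rfl⟩ ⟨θ2, hθ2, hθ⟩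
    have heq : θ2 = θ1 := Px_inj r x hr (hwin j hj θ2 hθ2) (hwin i hi θ1 hθ1) hθ
    subst heq
    -- θ2 lies in both Ico intervals, contradiction with i ≠ j
    rcases lt_or_gt_of_ne hij with hlt | hlt
    · have h1 : ((i:ℝ)+1) ≤ j := by exact_mod_cast hlt
      have := hθ1.2; have := hθ2.1
      nlinarith
    · have h1 : ((j:ℝ)+1) ≤ i := by exact_mod_cast hlt
      have := hθ1.1; have := hθ2.2
      nlinarith
  -- arcs all have the same measure
  have hBsucc : ∀ j : ℕ, ν (B (j+1)) = ν (B j) := by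
    intro j
    have hfix := rot_fixes x h
    have hmap := hrot (rot x h) hfix
    have himg : (rot x h) '' (B j) = B (j+1) := by
      rw [hB]
      simp only
      rw [← Set.image_comp]
      have hcomp : (rot x h) ∘ (Px r x) = (Px r x) ∘ (fun θ => θ + h) := by
        funext θ
        simp [rot_Px, add_comm]
      rw [hcomp, Set.image_comp, Set.image_add_const_Ico]
      push_cast
      ring_nf
    have hpre : (rot x h) ⁻¹' (B (j+1)) = B j := by
      rw [← himg, Set.preimage_image_eq _ (rot x h).injective]
    calc ν (B (j+1)) = Measure.map (rot x h) ν (B (j+1)) := by rw [hmap]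
      _ = ν ((rot x h) ⁻¹' (B (j+1))) := by
          rw [Measure.map_apply ((rot x h).continuous.measurable) (hmeas _)]
      _ = ν (B j) := by rw [hpre]
  have hBeq : ∀ j : ℕ, ν (B j) = ν (B 0) := by
    intro j
    induction j with
    | zero => rfl
    | succ n ih => rw [hBsucc n, ih]
  -- the arcs cover the sphere
  have hcover : {y | dist x y = r} ⊆ ⋃ j ∈ Finset.range N, B j := by
    intro w hw
    obtain ⟨θ, hθmem, hθ⟩ := Px_surj_window r x hr w hw c
    set j : ℕ := ⌊(θ - c)/h⌋₊ with hj
    have hθc : 0 ≤ θ - c := by linarith [hθmem.1]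
    have hdiv : (θ - c)/h < N := by
      rw [div_lt_iff₀ hh0]
      have := hθmem.2
      rw [← hNh] at this
      linarith
    have hjN : j < N := by
      rw [hj]
      exact_mod_cast Nat.floor_lt (by positivity) |>.2 hdiv
    refine Set.mem_biUnion (Finset.mem_range.2 hjN) ⟨θ, ⟨?_, ?_⟩, hθ⟩
    · have := Nat.floor_le (a := (θ - c)/h) (by positivity)
      rw [← hj] at this
      have h2 := (le_div_iff₀ hh0).1 this
      linarith
    · have := Nat.lt_floor_add_one ((θ - c)/h)
      rw [← hj] at this
      have h2 := (div_lt_iff₀ hh0).1 this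
      linarith [h2]
  -- so each arc has measure at most 1/N
  have hsum : (N : ℝ≥0∞) * ν (B 0) ≤ 1 := by
    have h1 : ∑ j ∈ Finset.range N, ν (B j) = ν (⋃ j ∈ Finset.range N, B j) := by
      rw [measure_biUnion_finset ?_ (fun j _ => hmeas j)]
      intro i hi j hj hij
      exact hdisj i (Finset.mem_range.1 hi) j (Finset.mem_range.1 hj) hij
    have h2 : ∑ j ∈ Finset.range N, ν (B j) = N * ν (B 0) := by
      rw [Finset.sum_congr rfl (fun j _ => hBeq j)]
      simp [Finset.sum_const, nsmul_eq_mul]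
    rw [← h2, h1]
    exact (measure_mono (Set.subset_univ _)).trans_eq measure_univ
  have hB0 : ν (B 0) ≤ 1/N := by
    rw [ENNReal.le_div_iff_mul_le (Or.inl (by exact_mod_cast hN0.ne')) (Or.inl (by simp))]
    rw [mul_comm]
    exact hsum
  -- the bad set is contained in B 0 ∪ B 1 ∪ (sphere complement)
  have hsub : {z2 | dist z1 z2 < (2-ε)*r} ⊆ (B 0 ∪ B 1) ∪ {y | dist x y = r}ᶜ := by
    intro z2 hz2
    by_cases hz2S : dist x z2 = r
    · left
      obtain ⟨θ, hθmem, hθ⟩ := Px_surj_window r x hr z2 hz2S c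
      by_cases hθ2 : θ < c + 2*h
      · rcases lt_or_ge θ (c + h) with hcase | hcase
        · left
          exact ⟨θ, ⟨by simpa using hθmem.1, by push_cast; simpa using hcase⟩, hθ⟩
        · right
          exact ⟨θ, ⟨by push_cast; simpa using hcase, by push_cast; linarith [hθ2]⟩, hθ⟩
      · exfalso
        push_neg at hθ2
        set ψ : ℝ := θ - φ1 with hψ
        have hψ1 : h ≤ ψ := by rw [hψ, hc] at *; linarith
        have hψ2 : ψ < π - h := by
          have := hθmem.2
          rw [hψ, hc] at *
          linarith
        have hsin : Real.sin h ≤ Real.sin ψ := by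
          rcases le_or_gt ψ (π/2) with hψle | hψgt
          · exact Real.sin_le_sin_of_le_of_le_pi_div_two (by linarith) hψle hψ1
          · rw [← Real.sin_pi_sub ψ]
            exact Real.sin_le_sin_of_le_of_le_pi_div_two (by linarith) (by linarith) (by linarith)
        have hsin0 : 0 < Real.sin h := Real.sin_pos_of_pos_of_lt_pi hh0 (by linarith)
        have hdist : dist z1 z2 = dist (P r φ1) (P r θ) := by
          rw [← hφ1, ← hθ, dist_Px_Px]
        have hch : Real.cosh ((2-ε)*r) ≤ Real.cosh (dist z1 z2) := by
          rw [hdist, cosh_dist_P]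
          have : Real.sin h ^ 2 ≤ Real.sin (φ1 - θ) ^ 2 := by
            rw [show φ1 - θ = -ψ by rw [hψ]; ring, Real.sin_neg, neg_sq]
            nlinarith
          nlinarith [sq_nonneg (Real.sinh r)]
        have : (2-ε)*r ≤ dist z1 z2 := by
          have habs := Real.cosh_le_cosh.1 hch
          calc (2-ε)*r ≤ |(2-ε)*r| := le_abs_self _
            _ ≤ |dist z1 z2| := habs
            _ = dist z1 z2 := abs_of_nonneg dist_nonneg
        exact absurd hz2 (not_lt.2 this)
    · right
      exact hz2S
  calc ν {z2 | dist z1 z2 < (2-ε)*r} ≤ ν ((B 0 ∪ B 1) ∪ {y | dist x y = r}ᶜ) := measure_mono hsub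
    _ ≤ ν (B 0 ∪ B 1) + ν {y | dist x y = r}ᶜ := measure_union_le _ _
    _ ≤ (ν (B 0) + ν (B 1)) + 0 := by
        rw [hsupp]
        exact add_le_add_left (measure_union_le _ _) 0
    _ ≤ 1/N + 1/N := by
        rw [add_zero]
        exact add_le_add hB0 ((hBeq 1) ▸ hB0)
    _ = 2/N := by
        rw [ENNReal.div_add_div_same]
        norm_num

/-- the sphere has positive imaginary-axis points, so the eventual cosh inequality -/
lemma eventually_cosh (ε : ℝ) (hε : 0 < ε) (hε1 : ε ≤ 1) (N : ℕ) (hN : 2 ≤ N) :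
    ∀ᶠ r in atTop, Real.cosh ((2-ε)*r) ≤ 1 + 2*Real.sinh r^2 * Real.sin (π/N)^2 := by
  have hpi := Real.pi_pos
  have hN0 : (0:ℝ) < N := by positivity
  have hsin0 : 0 < Real.sin (π/N) := by
    apply Real.sin_pos_of_pos_of_lt_pi (by positivity)
    rw [div_lt_iff₀ hN0]
    nlinarith [(show (2:ℝ) ≤ N by exact_mod_cast hN)]
  set s := Real.sin (π/N) with hs
  filter_upwards [eventually_ge_atTop (1:ℝ),
    eventually_ge_atTop (Real.log (8/s^2) / ε)] with r hr1 hrlog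
  have hr0 : (0:ℝ) < r := by linarith
  -- exp (ε r) ≥ 8 / s^2
  have hexp : 8/s^2 ≤ Real.exp (ε*r) := by
    have h1 : Real.log (8/s^2) ≤ ε*r := by
      rw [div_le_iff₀ hε] at hrlog
      linarith
    calc 8/s^2 = Real.exp (Real.log (8/s^2)) := by
          rw [Real.exp_log (by positivity)]
      _ ≤ Real.exp (ε*r) := Real.exp_le_exp.2 h1
  -- sinh r ≥ exp r / 4
  have hsinh : Real.exp r / 4 ≤ Real.sinh r := by
    rw [Real.sinh_eq]
    have h1 : Real.exp (-r) ≤ 1 := Real.exp_le_one_iff.2 (by linarith)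
    have h2 : (2:ℝ) ≤ Real.exp r := by
      calc (2:ℝ) ≤ Real.exp 1 := by
            have := Real.add_one_le_exp 1
            linarith
        _ ≤ Real.exp r := Real.exp_le_exp.2 hr1
    linarith
  have hcosh_exp : Real.cosh ((2-ε)*r) ≤ Real.exp ((2-ε)*r) := by
    rw [← Real.cosh_add_sinh]
    have : 0 ≤ Real.sinh ((2-ε)*r) := Real.sinh_nonneg_iff.2 (by nlinarith)
    linarith
  have hs2 : 0 < s^2 := by positivity
  have hexp' : (8:ℝ) ≤ Real.exp (ε*r) * s^2 := by
    rw [div_le_iff₀ hs2] at hexp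
    linarith
  have hkey : Real.exp ((2-ε)*r) ≤ Real.exp (2*r) * s^2 / 8 := by
    have h1 : Real.exp ((2-ε)*r) * 8 ≤ Real.exp ((2-ε)*r) * (Real.exp (ε*r) * s^2) :=
      mul_le_mul_of_nonneg_left hexp' (Real.exp_pos _).le
    have h2 : Real.exp ((2-ε)*r) * Real.exp (ε*r) = Real.exp (2*r) := by
      rw [← Real.exp_add]; ring_nf
    rw [le_div_iff₀ (by norm_num : (0:ℝ) < 8)]
    nlinarith [h1, h2]
  have hsinh2 : Real.exp (2*r) / 16 ≤ Real.sinh r ^ 2 := by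
    have h0 : 0 ≤ Real.exp r / 4 := by positivity
    have := mul_self_le_mul_self h0 hsinh
    have hh : Real.exp r * Real.exp r = Real.exp (2*r) := by
      rw [← Real.exp_add]; ring_nf
    nlinarith [this]
  calc Real.cosh ((2-ε)*r) ≤ Real.exp (2*r) * s^2/8 := hcosh_exp.trans hkey
    _ ≤ 2 * Real.sinh r^2 * s^2 := by nlinarith
    _ ≤ 1 + 2 * Real.sinh r^2 * s^2 := by linarith


end Meas

end

end Stmt13Aux

open Real in
open scoped ENNReal in
/-- statistical hyperbolicity of the hyperbolic plane: for the rotation-invariant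
(i.e. invariant under all isometries fixing the centre) probability measures `ν_r` on the
metric spheres `S_r(x)` in `ℍ²`, the average distance between pairs of points on `S_r(x)`,
normalized by `r`, tends to `2` as `r → ∞`. -/
theorem stmt13 [MeasurableSpace UpperHalfPlane] [BorelSpace UpperHalfPlane] (x : UpperHalfPlane) (ν : ℝ → Measure UpperHalfPlane)
    (hprob : ∀ r > 0, IsProbabilityMeasure (ν r))
    (hsupp : ∀ r > 0, ν r {y | dist x y = r}ᶜ = 0)
    (hrot : ∀ r > 0, ∀ f : UpperHalfPlane ≃ᵢ UpperHalfPlane, f x = x →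
      Measure.map f (ν r) = ν r) :
    Tendsto (fun r : ℝ =>
        (∫ z : UpperHalfPlane × UpperHalfPlane, dist z.1 z.2 ∂((ν r).prod (ν r))) / r)
      atTop (nhds 2) := by
  rw [Metric.tendsto_atTop]
  intro ε hε
  set ε₁ : ℝ := min (ε/4) 1 with hε₁def
  have hε₁0 : 0 < ε₁ := lt_min (by linarith) one_pos
  have hε₁1 : ε₁ ≤ 1 := min_le_right _ _
  have hε₁ε : ε₁ ≤ ε/4 := min_le_left _ _
  set N : ℕ := max 2 ⌈16/ε⌉₊ with hNdef
  have hN2 : 2 ≤ N := le_max_left _ _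
  have hN0 : (0:ℝ) < N := by
    have : (2:ℝ) ≤ N := by exact_mod_cast hN2
    linarith
  have h4N : 4/(N:ℝ) ≤ ε/4 := by
    have h1 : (16/ε : ℝ) ≤ ⌈16/ε⌉₊ := Nat.le_ceil _
    have h2 : ((⌈16/ε⌉₊ : ℕ) : ℝ) ≤ N := by
      exact_mod_cast Nat.cast_le.2 (le_max_right 2 _)
    have h3 : 16/ε ≤ (N:ℝ) := h1.trans h2
    rw [div_le_div_iff₀ hN0 (by norm_num)]
    rw [div_le_iff₀ hε] at h3
    nlinarith
  -- choose the eventual threshold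
  have hev := Stmt13Aux.eventually_cosh ε₁ hε₁0 hε₁1 N hN2
  rw [eventually_atTop] at hev
  obtain ⟨R₀, hR₀⟩ := hev
  refine ⟨max R₀ 1, fun r hr => ?_⟩
  have hr1 : 1 ≤ r := le_trans (le_max_right R₀ 1) hr
  have hr0 : 0 < r := by linarith
  have hrR₀ : R₀ ≤ r := le_trans (le_max_left R₀ 1) hr
  have hcosh := hR₀ r hrR₀
  haveI : IsProbabilityMeasure (ν r) := hprob r hr0
  set μ := ν r with hμ
  set μ2 := μ.prod μ with hμ2
  haveI : IsProbabilityMeasure μ2 := by rw [hμ2]; infer_instance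
  set S : Set ℍ := {y | dist x y = r} with hS
  have hSmeas : MeasurableSet S := by
    have : IsClosed S := isClosed_eq (continuous_const.dist continuous_id) continuous_const
    exact this.measurableSet
  have hSnull : μ Sᶜ = 0 := hsupp r hr0
  have hdistmeas : Measurable (fun p : ℍ × ℍ => dist p.1 p.2) :=
    (continuous_dist.comp (continuous_fst.prodMk continuous_snd)).measurable
  -- a.e. both coordinates on the sphere
  have haeS : ∀ᵐ p ∂μ2, p.1 ∈ S ∧ p.2 ∈ S := by
    have h1 : μ2 ((S ×ˢ S)ᶜ) = 0 := by
      have hsub : (S ×ˢ S)ᶜ ⊆ (Sᶜ ×ˢ (Set.univ : Set ℍ)) ∪ ((Set.univ : Set ℍ) ×ˢ Sᶜ) := by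
        intro p hp
        rw [Set.mem_compl_iff, Set.mem_prod] at hp
        push_neg at hp
        by_cases h : p.1 ∈ S
        · right; exact ⟨Set.mem_univ _, hp h⟩
        · left; exact ⟨h, Set.mem_univ _⟩
      apply measure_mono_null hsub
      apply le_antisymm _ zero_le
      calc μ2 ((Sᶜ ×ˢ (Set.univ : Set ℍ)) ∪ ((Set.univ : Set ℍ) ×ˢ Sᶜ))
          ≤ μ2 (Sᶜ ×ˢ (Set.univ : Set ℍ)) + μ2 ((Set.univ : Set ℍ) ×ˢ Sᶜ) := measure_union_le _ _
        _ = 0 := by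
            rw [hμ2, Measure.prod_prod, Measure.prod_prod, hSnull]
            simp
    have h2 : ∀ᵐ p ∂μ2, p ∈ S ×ˢ S := by
      rw [MeasureTheory.ae_iff]
      have heq : {p : ℍ × ℍ | ¬ p ∈ S ×ˢ S} = (S ×ˢ S)ᶜ := rfl
      rw [heq, h1]
    filter_upwards [h2] with p hp
    exact ⟨hp.1, hp.2⟩
  -- integrability and upper bound
  have hbound : ∀ᵐ p ∂μ2, dist p.1 p.2 ≤ 2*r := by
    filter_upwards [haeS] with p hp
    have h1 : dist p.1 x = r := by rw [dist_comm]; exact hp.1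
    have h2 : dist x p.2 = r := hp.2
    calc dist p.1 p.2 ≤ dist p.1 x + dist x p.2 := dist_triangle _ _ _
      _ = 2*r := by rw [h1, h2]; ring
  have hint : Integrable (fun p : ℍ × ℍ => dist p.1 p.2) μ2 := by
    apply Integrable.mono' (integrable_const (2*r)) hdistmeas.aestronglyMeasurable
    filter_upwards [hbound] with p hp
    rw [Real.norm_eq_abs, abs_of_nonneg dist_nonneg]
    exact hp
  have hupper : (∫ z : ℍ × ℍ, dist z.1 z.2 ∂μ2) ≤ 2*r := by
    calc (∫ z : ℍ × ℍ, dist z.1 z.2 ∂μ2) ≤ ∫ _ : ℍ × ℍ, 2*r ∂μ2 :=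
          integral_mono_ae hint (integrable_const _) hbound
      _ = 2*r := by simp [measure_univ]
  -- lower bound
  set Bad : Set (ℍ × ℍ) := {p | dist p.1 p.2 < (2-ε₁)*r} with hBad
  have hBadmeas : MeasurableSet Bad := by
    apply measurableSet_lt hdistmeas measurable_const
  have hBadbound : μ2 Bad ≤ 2/N := by
    rw [hμ2, Measure.prod_apply hBadmeas]
    have hae : ∀ᵐ z1 ∂μ, μ (Prod.mk z1 ⁻¹' Bad) ≤ 2/N := by
      have haeS1 : ∀ᵐ z1 ∂μ, z1 ∈ S := by
        rw [MeasureTheory.ae_iff]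
        exact hSnull
      filter_upwards [haeS1] with z1 hz1
      have : Prod.mk z1 ⁻¹' Bad = {z2 | dist z1 z2 < (2-ε₁)*r} := rfl
      rw [this]
      exact Stmt13Aux.slice_bound r x μ (hrot r hr0) hSnull hr0 N hN2 ε₁ hcosh z1 hz1
    calc (∫⁻ z1, μ (Prod.mk z1 ⁻¹' Bad) ∂μ) ≤ ∫⁻ _, 2/N ∂μ := lintegral_mono_ae hae
      _ = 2/N := by simp [measure_univ]
  have hGoodreal : (1:ℝ) - 4/N ≤ (μ2 Badᶜ).toReal := by
    have h1 : μ2 Badᶜ = 1 - μ2 Bad := prob_compl_eq_one_sub hBadmeas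
    have hNne0 : (N:ℝ≥0∞) ≠ 0 := by
      simp only [ne_eq, Nat.cast_eq_zero]
      omega
    have h2N : (2/N : ℝ≥0∞) ≠ ∞ := (ENNReal.div_lt_top (by simp) hNne0).ne
    have hBadreal : (μ2 Bad).toReal ≤ 2/(N:ℝ) := by
      have := ENNReal.toReal_mono h2N hBadbound
      rwa [ENNReal.toReal_div, ENNReal.toReal_ofNat, ENNReal.toReal_natCast] at this
    have h3 : (μ2 Badᶜ).toReal = 1 - (μ2 Bad).toReal := by
      rw [h1, ENNReal.toReal_sub_of_le prob_le_one ENNReal.one_ne_top]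
      simp
    rw [h3]
    have h24 : 2/(N:ℝ) ≤ 4/N := by gcongr <;> norm_num
    nlinarith [hBadreal, hN0]
  have hlower : (2-ε₁)*r*(1 - 4/N) ≤ ∫ z : ℍ × ℍ, dist z.1 z.2 ∂μ2 := by
    have hle : ∀ p : ℍ × ℍ, Badᶜ.indicator (fun _ => (2-ε₁)*r) p ≤ dist p.1 p.2 := by
      intro p
      rw [Set.indicator_apply]
      split_ifs with hp
      · rw [Set.mem_compl_iff, hBad, Set.mem_setOf_eq, not_lt] at hp
        exact hp
      · exact dist_nonneg
    have hindint : Integrable (Badᶜ.indicator (fun _ => (2-ε₁)*r)) μ2 := by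
      apply Integrable.indicator (integrable_const _) hBadmeas.compl
    calc (2-ε₁)*r*(1 - 4/N) ≤ (μ2 Badᶜ).toReal * ((2-ε₁)*r) := by
          have hnn : (0:ℝ) ≤ (2-ε₁)*r := by nlinarith
          nlinarith [hGoodreal, hnn, ENNReal.toReal_nonneg (a := μ2 Badᶜ)]
      _ = ∫ p : ℍ × ℍ, Badᶜ.indicator (fun _ => (2-ε₁)*r) p ∂μ2 := by
          rw [integral_indicator_const _ hBadmeas.compl]
          simp [smul_eq_mul, mul_comm, Measure.real]
      _ ≤ ∫ z : ℍ × ℍ, dist z.1 z.2 ∂μ2 := integral_mono hindint hint hle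
  -- conclude
  rw [Real.dist_eq]
  set I : ℝ := ∫ z : ℍ × ℍ, dist z.1 z.2 ∂μ2 with hI
  have hIub : I/r ≤ 2 := by
    rw [div_le_iff₀ hr0]
    linarith
  have hIlb : 2 - (3/4)*ε ≤ I/r := by
    rw [le_div_iff₀ hr0]
    have h8N : 8/(N:ℝ) ≤ ε/2 := by
      have heq8 : 8/(N:ℝ) = 2*(4/N) := by ring
      linarith [h4N]
    have hquot : 0 ≤ 4*ε₁/(N:ℝ) := by positivity
    have hBexp : (2-ε₁)*(1 - 4/(N:ℝ)) = 2 - ε₁ - 8/N + 4*ε₁/N := by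
      field_simp
      ring
    have hAB : 2 - (3/4)*ε ≤ (2-ε₁)*(1 - 4/(N:ℝ)) := by
      rw [hBexp]
      linarith
    have := mul_le_mul_of_nonneg_right hAB hr0.le
    calc (2 - (3/4)*ε)*r ≤ ((2-ε₁)*(1 - 4/(N:ℝ)))*r := this
      _ = (2-ε₁)*r*(1 - 4/N) := by ring
      _ ≤ I := hlower
  rw [abs_of_nonpos (by linarith)]
  linarith
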